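/- For any string T of length n ≥ 2, el(T)/er(T) ≤ √(2n); equivalently, el(T)² ≤ 2n · er(T)². In particular el(T)/er(T) ∈ O(√n). -/

import Mathlib

open Finset

variable {α : Type*}

/-- Number of occurrences of `S` in `T`: positions `i` with `T[i..i+|S|-1] = S`. -/
def occ [DecidableEq α] (T S : List α) : ℕ :=
  ((Finset.range (T.length + 1)).filter fun i => (T.drop i).take S.length = S).card

/-- `S` is a maximal repeat of `T`. -/
def MaxRepeat [DecidableEq α] (T S : List α) : Prop :=
  2 ≤ occ T S ∧ ∀ a : α, occ T (a :: S) < occ T S ∧ occ T (S ++ [a]) < occ T S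

instance [DecidableEq α] [Fintype α] (T S : List α) : Decidable (MaxRepeat T S) := by
  unfold MaxRepeat; infer_instance

/-- The finite set of maximal repeats of `T`. -/
def MRset [DecidableEq α] [Fintype α] (T : List α) : Finset (List α) :=
  (T.tails.flatMap List.inits).toFinset.filter fun S => MaxRepeat T S

/-- Number of right extensions of `S` in `T`. -/
def rext [DecidableEq α] [Fintype α] (T S : List α) : ℕ :=
  (Finset.univ.filter fun a : α => (S ++ [a]) <:+: T).card

/-- Number of left extensions of `S` in `T`. -/
def lext [DecidableEq α] [Fintype α] (T S : List α) : ℕ :=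
  (Finset.univ.filter fun a : α => (a :: S) <:+: T).card

/-- Total number of right extensions of maximal repeats of `T`. -/
def er [DecidableEq α] [Fintype α] (T : List α) : ℕ := ∑ S ∈ MRset T, rext T S

/-- Total number of left extensions of maximal repeats of `T`. -/
def el [DecidableEq α] [Fintype α] (T : List α) : ℕ := ∑ S ∈ MRset T, lext T S

section Aux
variable [DecidableEq α]

def occSet (T S : List α) : Finset ℕ :=
  (Finset.range (T.length + 1)).filter fun i => (T.drop i).take S.length = S

lemma occ_eq_card (T S : List α) : occ T S = (occSet T S).card := rfl

lemma mem_occSet {T S : List α} {i : ℕ} :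
    i ∈ occSet T S ↔ i ≤ T.length ∧ (T.drop i).take S.length = S := by
  simp [occSet, Nat.lt_succ_iff]

lemma occSet_bound {T S : List α} {i : ℕ} (h : i ∈ occSet T S) :
    i + S.length ≤ T.length := by
  rw [mem_occSet] at h
  have := congrArg List.length h.2
  simp [List.length_take, List.length_drop] at this
  omega

lemma occSet_take_drop {T S : List α} {i : ℕ} (h : i ∈ occSet T S) :
    T = T.take i ++ S ++ T.drop (i + S.length) := by
  rw [mem_occSet] at h
  have h2 := List.take_append_drop S.length (T.drop i)
  rw [h.2, List.drop_drop] at h2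
  rw [List.append_assoc]
  rw [h2, List.take_append_drop]

lemma occSet_infix {T S : List α} {i : ℕ} (h : i ∈ occSet T S) : S <:+: T :=
  ⟨T.take i, T.drop (i + S.length), (occSet_take_drop h).symm⟩

lemma mem_occSet_of_decomp {T S A B : List α} (h : T = A ++ S ++ B) :
    A.length ∈ occSet T S := by
  rw [mem_occSet]
  constructor
  · subst h; simp
  · subst h
    rw [List.append_assoc, List.drop_left, List.take_left]

lemma occ_pos_iff {T S : List α} : 0 < occ T S ↔ S <:+: T := by
  rw [occ_eq_card, Finset.card_pos]
  constructor
  · rintro ⟨i, hi⟩; exact occSet_infix hi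
  · rintro ⟨A, B, hAB⟩
    exact ⟨A.length, mem_occSet_of_decomp (by rw [← hAB])⟩

lemma occSet_mono {T S S' : List α} (h : S' <+: S) : occSet T S ⊆ occSet T S' := by
  intro i hi
  rw [mem_occSet] at hi ⊢
  refine ⟨hi.1, ?_⟩
  have hl : S'.length ≤ S.length := h.length_le
  rw [show S'.length = min S'.length S.length by omega, ← List.take_take, hi.2]
  exact (List.prefix_iff_eq_take.mp h).symm

lemma occ_anti {T S S' : List α} (h : S' <+: S) : occ T S ≤ occ T S' :=
  Finset.card_le_card (occSet_mono h)

lemma occSet_suffix {T S : List α} (h : S <:+ T) :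
    T.length - S.length ∈ occSet T S := by
  obtain ⟨A, hA⟩ := h
  have : A.length = T.length - S.length := by
    have := congrArg List.length hA; simp at this; omega
  rw [← this]
  exact mem_occSet_of_decomp (B := []) (by rw [← hA]; simp)

/-- If `i` is an occurrence of `S` ending at the text end, then `S` is a suffix. -/
lemma occSet_end_suffix {T S : List α} {i : ℕ} (h : i ∈ occSet T S)
    (hend : i + S.length = T.length) : S <:+ T := by
  rw [mem_occSet] at h
  refine ⟨T.take i, ?_⟩
  have hd : T.drop i = S := by
    have hlen : (T.drop i).length = S.length := by
      rw [List.length_drop]; omega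
    rw [← h.2, List.take_of_length_le (le_of_eq hlen)]
  rw [← hd, List.take_append_drop]

end Aux
section Aux2
variable [DecidableEq α]

lemma occSet_lt_of_not_suffix {T S : List α} {i : ℕ} (h : i ∈ occSet T S)
    (hns : ¬ S <:+ T) : i + S.length < T.length := by
  have hb := occSet_bound h
  rcases lt_or_eq_of_le hb with h' | h'
  · exact h'
  · exact absurd (occSet_end_suffix h h') hns

lemma occSet_extend {T S : List α} {i : ℕ} (h : i ∈ occSet T S)
    (hlt : i + S.length < T.length) :
    ∃ a, i ∈ occSet T (S ++ [a]) := by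
  refine ⟨T[i + S.length]'hlt, ?_⟩
  rw [mem_occSet] at h ⊢
  refine ⟨h.1, ?_⟩
  rw [List.length_append, List.length_singleton, List.take_succ, h.2]
  congr 1
  rw [List.getElem?_drop]
  rw [List.getElem?_eq_getElem hlt]
  rfl

lemma exists_branch_of_occ_two {T S : List α} (h : 2 ≤ occ T S) :
    ∃ a, (S ++ [a]) <:+: T := by
  rw [occ_eq_card] at h
  obtain ⟨i, hi, j, hj, hij⟩ := (Finset.one_lt_card (s := occSet T S)).mp (by omega)
  rcases Nat.lt_or_ge i j with hlt | hge
  · have : i + S.length < T.length := lt_of_lt_of_le (by omega) (occSet_bound hj)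
    obtain ⟨a, ha⟩ := occSet_extend hi this
    exact ⟨a, occSet_infix ha⟩
  · have hlt : j < i := lt_of_le_of_ne hge (Ne.symm hij)
    have : j + S.length < T.length := lt_of_lt_of_le (by omega) (occSet_bound hi)
    obtain ⟨a, ha⟩ := occSet_extend hj this
    exact ⟨a, occSet_infix ha⟩

lemma occ_concat_lt_of_suffix {T S : List α} (hs : S <:+ T) (a : α) :
    occ T (S ++ [a]) < occ T S := by
  rw [occ_eq_card, occ_eq_card]
  refine Finset.card_lt_card ⟨occSet_mono (List.prefix_append _ _), ?_⟩
  intro hsub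
  have hmem := occSet_suffix hs
  have := occSet_bound (hsub hmem)
  have hlen : S.length ≤ T.length := hs.length_le
  simp [List.length_append] at this
  omega

lemma occSet_concat_disjoint {T S : List α} {a b : α} (hab : a ≠ b) :
    Disjoint (occSet T (S ++ [a])) (occSet T (S ++ [b])) := by
  rw [Finset.disjoint_left]
  intro i hi hib
  rw [mem_occSet] at hi hib
  have : S ++ [a] = S ++ [b] := by
    rw [← hi.2, ← hib.2]
    congr 1
    simp
  simp at this
  exact hab this

lemma occ_concat_lt_of_two_branches {T S : List α} {a b : α}
    (hb : (S ++ [b]) <:+: T) (hab : b ≠ a) :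
    occ T (S ++ [a]) < occ T S := by
  have h1 : 0 < occ T (S ++ [b]) := occ_pos_iff.mpr hb
  have hd := occSet_concat_disjoint (T := T) (S := S) (Ne.symm hab)
  have hsub : occSet T (S ++ [a]) ∪ occSet T (S ++ [b]) ⊆ occSet T S := by
    refine Finset.union_subset (occSet_mono (List.prefix_append _ _))
      (occSet_mono (List.prefix_append _ _))
  have := Finset.card_le_card hsub
  rw [Finset.card_union_of_disjoint hd] at this
  rw [occ_eq_card, occ_eq_card] at *
  omega

lemma occSet_eq_of_unique_branch {T S : List α} {a : α}
    (huniq : ∀ b, (S ++ [b]) <:+: T → b = a) (hns : ¬ S <:+ T) :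
    occSet T S = occSet T (S ++ [a]) := by
  apply Finset.Subset.antisymm
  · intro i hi
    obtain ⟨b, hb⟩ := occSet_extend hi (occSet_lt_of_not_suffix hi hns)
    rwa [huniq b (occSet_infix hb)] at hb
  · exact occSet_mono (List.prefix_append _ _)

end Aux2
section Aux3
variable [DecidableEq α] [Fintype α]

/-- The branch set: letters that can extend `X` to the right inside `T`. -/
def bs (T X : List α) : Finset α := Finset.univ.filter fun a => (X ++ [a]) <:+: T

lemma mem_bs {T X : List α} {a : α} : a ∈ bs T X ↔ (X ++ [a]) <:+: T := by
  simp [bs]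

lemma bs_nonempty_of_infix_not_suffix {T X : List α} (h : X <:+: T) (hns : ¬ X <:+ T) :
    (bs T X).Nonempty := by
  obtain ⟨i, hi⟩ := Finset.card_pos.mp (occ_pos_iff.mpr h)
  obtain ⟨a, ha⟩ := occSet_extend hi (occSet_lt_of_not_suffix hi hns)
  exact ⟨a, mem_bs.mpr (occSet_infix ha)⟩

lemma bs_nonempty_of_occ_two {T X : List α} (h : 2 ≤ occ T X) : (bs T X).Nonempty := by
  obtain ⟨a, ha⟩ := exists_branch_of_occ_two h
  exact ⟨a, mem_bs.mpr ha⟩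

lemma infix_of_lt_length {T X : List α} (h : X <:+: T) (hne : ¬ X <:+ T) :
    X.length < T.length := by
  rcases lt_or_eq_of_le h.length_le with h' | h'
  · exact h'
  · exact absurd (h.eq_of_length h' ▸ List.suffix_rfl) hne

variable [Nonempty α]

noncomputable def pick (s : Finset α) : α :=
  if h : s.Nonempty then h.choose else Classical.arbitrary α

lemma pick_mem {s : Finset α} (h : s.Nonempty) : pick s ∈ s := by
  rw [pick, dif_pos h]; exact h.choose_spec

/-- Follow the chosen branch until reaching a suffix of `T`. -/
noncomputable def descend (T X : List α) : List α :=
  if h : ¬ X <:+ T ∧ (bs T X).Nonempty ∧ X.length < T.length then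
    descend T (X ++ [pick (bs T X)])
  else X
termination_by T.length - X.length
decreasing_by simp; omega

lemma descend_prefix (T X : List α) : X <+: descend T X := by
  induction X using descend.induct T with
  | case1 X h ih =>
    rw [descend, dif_pos h]
    exact List.IsPrefix.trans (List.prefix_append _ _) ih
  | case2 X h =>
    rw [descend, dif_neg h]

lemma descend_suffix {T X : List α} (h : X <:+: T) : descend T X <:+ T := by
  induction X using descend.induct T with
  | case1 X hc ih =>
    rw [descend, dif_pos hc]
    refine ih (mem_bs.mp (pick_mem hc.2.1))
  | case2 X hc =>
    rw [descend, dif_neg hc]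
    by_contra hns
    exact hc ⟨hns, bs_nonempty_of_infix_not_suffix h hns, infix_of_lt_length h hns⟩

lemma descend_path {T : List α} : ∀ {X W : List α}, X <+: W → W <+: descend T X →
    W ≠ descend T X → ¬ W <:+ T ∧ W ++ [pick (bs T W)] <+: descend T X := by
  intro X W
  induction X using descend.induct T with
  | case1 X hc ih =>
    intro h1 h2 h3
    rw [descend, dif_pos hc] at h2 h3 ⊢
    by_cases hw : W = X
    · subst hw
      exact ⟨hc.1, descend_prefix _ _⟩
    · have hlen : X.length < W.length := by
        rcases lt_or_eq_of_le h1.length_le with h' | h'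
        · exact h'
        · exact absurd (h1.eq_of_length h').symm hw
      have hX' : X ++ [pick (bs T X)] <+: W :=
        List.prefix_of_prefix_length_le (descend_prefix _ _) h2 (by simp; omega)
      exact ih hX' h2 h3
  | case2 X hc =>
    intro h1 h2 h3
    rw [descend, dif_neg hc] at h2 h3
    exact absurd (h1.eq_of_length (le_antisymm h1.length_le h2.length_le) ▸ rfl) h3

end Aux3
section Aux4
variable [DecidableEq α] [Fintype α]

def infixes (T : List α) : Finset (List α) := (T.tails.flatMap List.inits).toFinset

lemma mem_infixes {T S : List α} : S ∈ infixes T ↔ S <:+: T := by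
  simp only [infixes, List.mem_toFinset, List.mem_flatMap, List.mem_tails, List.mem_inits,
    List.infix_iff_prefix_suffix]
  constructor
  · rintro ⟨l, h1, h2⟩; exact ⟨l, h2, h1⟩
  · rintro ⟨t, h1, h2⟩; exact ⟨t, h2, h1⟩

lemma MRset_eq_filter (T : List α) : MRset T = (infixes T).filter (fun S => MaxRepeat T S) := rfl

def RM2set (T : List α) : Finset (List α) :=
  (infixes T).filter fun W => 2 ≤ occ T W ∧ ∀ a, occ T (W ++ [a]) < occ T W

lemma right_max_of_suffix_or_branch {T W : List α}
    (hcond : W <:+ T ∨ 2 ≤ (bs T W).card) : ∀ a, occ T (W ++ [a]) < occ T W := by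
  intro a
  rcases hcond with hs | hb
  · exact occ_concat_lt_of_suffix hs a
  · obtain ⟨x, hx, y, hy, hxy⟩ := Finset.one_lt_card.mp hb
    rcases eq_or_ne x a with rfl | hxa
    · exact occ_concat_lt_of_two_branches (mem_bs.mp hy) (fun h => hxy h.symm)
    · exact occ_concat_lt_of_two_branches (mem_bs.mp hx) hxa

variable [Nonempty α]

/-- Extend along unary non-suffix branches (right-saturation). -/
noncomputable def sat (T X : List α) : List α :=
  if h : ¬ X <:+ T ∧ (bs T X).card = 1 ∧ X.length < T.length then
    sat T (X ++ [pick (bs T X)])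
  else X
termination_by T.length - X.length
decreasing_by simp; omega

lemma sat_prefix (T X : List α) : X <+: sat T X := by
  induction X using sat.induct T with
  | case1 X h ih =>
    rw [sat, dif_pos h]
    exact List.IsPrefix.trans (List.prefix_append _ _) ih
  | case2 X h =>
    rw [sat, dif_neg h]

lemma unique_branch_of_card_one {T W : List α} (h : (bs T W).card = 1) :
    ∀ b, (W ++ [b]) <:+: T → b = pick (bs T W) := by
  obtain ⟨c, hc⟩ := Finset.card_eq_one.mp h
  intro b hb
  have hbm : b ∈ bs T W := mem_bs.mpr hb
  have hpm : pick (bs T W) ∈ bs T W := pick_mem (Finset.card_pos.mp (by omega))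
  generalize hP : pick (bs T W) = p at hpm ⊢
  rw [hc, Finset.mem_singleton] at hbm hpm
  rw [hbm, hpm]

lemma sat_occSet (T X : List α) : occSet T (sat T X) = occSet T X := by
  induction X using sat.induct T with
  | case1 X h ih =>
    rw [sat, dif_pos h, ih]
    exact (occSet_eq_of_unique_branch (unique_branch_of_card_one h.2.1) h.1).symm
  | case2 X h =>
    rw [sat, dif_neg h]

lemma sat_occ (T X : List α) : occ T (sat T X) = occ T X :=
  congrArg Finset.card (sat_occSet T X)

lemma sat_stop (T X : List α) :
    ¬ (¬ sat T X <:+ T ∧ (bs T (sat T X)).card = 1 ∧ (sat T X).length < T.length) := by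
  induction X using sat.induct T with
  | case1 X h ih =>
    rw [sat, dif_pos h]
    exact ih
  | case2 X h =>
    rw [sat, dif_neg h]
    exact h

lemma sat_mem_RM2 {T X : List α} (h2 : 2 ≤ occ T X) : sat T X ∈ RM2set T := by
  have hocc : occ T (sat T X) = occ T X := sat_occ T X
  have h2' : 2 ≤ occ T (sat T X) := hocc ▸ h2
  have hinf' : sat T X <:+: T := occ_pos_iff.mp (by omega)
  rw [RM2set, Finset.mem_filter, mem_infixes]
  refine ⟨hinf', h2', right_max_of_suffix_or_branch ?_⟩
  by_cases hs : sat T X <:+ T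
  · exact Or.inl hs
  · right
    have hstop := sat_stop T X
    push_neg at hstop
    have hlen := infix_of_lt_length hinf' hs
    have hcard := hstop hs
    have hne : (bs T (sat T X)).Nonempty := bs_nonempty_of_occ_two h2'
    have := Finset.card_pos.mpr hne
    omega

lemma bs_card_two_of_RM2 {T W : List α} (hW : W ∈ RM2set T) (hns : ¬ W <:+ T) :
    2 ≤ (bs T W).card := by
  rw [RM2set, Finset.mem_filter] at hW
  obtain ⟨_, h2, hmax⟩ := hW
  by_contra hlt
  have hne : (bs T W).Nonempty := bs_nonempty_of_occ_two h2
  have hpos := Finset.card_pos.mpr hne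
  have hcard : (bs T W).card = 1 := by omega
  have := occSet_eq_of_unique_branch (unique_branch_of_card_one hcard) hns
  have : occ T W = occ T (W ++ [pick (bs T W)]) := congrArg Finset.card this
  have := hmax (pick (bs T W))
  omega

/-- The "second branch if possible" choice. -/
noncomputable def cW (T W : List α) : α :=
  if W <:+ T then pick (bs T W) else pick ((bs T W).erase (pick (bs T W)))

noncomputable def fmap (T W : List α) : List α := descend T (W ++ [cW T W])

lemma cW_mem {T W : List α} (hW : W ∈ RM2set T) : cW T W ∈ bs T W := by
  have h2 : 2 ≤ occ T W := (Finset.mem_filter.mp hW).2.1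
  rw [cW]
  by_cases hs : W <:+ T
  · rw [if_pos hs]; exact pick_mem (bs_nonempty_of_occ_two h2)
  · rw [if_neg hs]
    have hcard := bs_card_two_of_RM2 hW hs
    have hne : ((bs T W).erase (pick (bs T W))).Nonempty := by
      rw [← Finset.card_pos]
      have := Finset.pred_card_le_card_erase (s := bs T W) (a := pick (bs T W))
      omega
    exact Finset.mem_of_mem_erase (pick_mem hne)

lemma cW_ne {T W : List α} (hW : W ∈ RM2set T) (hns : ¬ W <:+ T) :
    cW T W ≠ pick (bs T W) := by
  rw [cW, if_neg hns]
  have hcard := bs_card_two_of_RM2 hW hns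
  have hne : ((bs T W).erase (pick (bs T W))).Nonempty := by
    rw [← Finset.card_pos]
    have := Finset.pred_card_le_card_erase (s := bs T W) (a := pick (bs T W))
    omega
  exact Finset.ne_of_mem_erase (pick_mem hne)

def sfx (T : List α) : Finset (List α) := (Finset.range T.length).image fun k => T.drop k

lemma card_sfx_le (T : List α) : (sfx T).card ≤ T.length :=
  le_trans Finset.card_image_le (by simp)

lemma mem_sfx {T s : List α} (h : s <:+ T) (hne : s ≠ []) : s ∈ sfx T := by
  obtain ⟨A, hA⟩ := h
  rw [sfx, Finset.mem_image]
  refine ⟨A.length, ?_, by rw [← hA, List.drop_left]⟩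
  rw [Finset.mem_range, ← hA]
  have : 0 < s.length := List.length_pos_iff.mpr hne
  simp
  omega

lemma fmap_mem_sfx {T W : List α} (hW : W ∈ RM2set T) : fmap T W ∈ sfx T := by
  have hinf : (W ++ [cW T W]) <:+: T := mem_bs.mp (cW_mem hW)
  refine mem_sfx (descend_suffix hinf) ?_
  intro h0
  have := (descend_prefix T (W ++ [cW T W])).length_le
  rw [show descend T (W ++ [cW T W]) = fmap T W from rfl, h0] at this
  simp at this

lemma fmap_key {T W W' : List α} (hW' : W' ∈ RM2set T) (hpre : W <+: W') (hne : W ≠ W')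
    (heq : fmap T W = fmap T W') : False := by
  have hL : W' ++ [cW T W'] <+: fmap T W' := descend_prefix _ _
  have hWL : W' <+: fmap T W := by
    rw [heq]; exact (List.prefix_append _ _).trans hL
  have hlenW : W.length < W'.length := by
    rcases lt_or_eq_of_le hpre.length_le with h' | h'
    · exact h'
    · exact absurd (hpre.eq_of_length h') hne
  have hneL : W' ≠ fmap T W := by
    intro h
    have := hL.length_le
    rw [← heq, ← h] at this
    simp at this
  have hXfmap : W ++ [cW T W] <+: fmap T W := descend_prefix _ _
  have hXpre : W ++ [cW T W] <+: W' :=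
    List.prefix_of_prefix_length_le hXfmap hWL (by simp; omega)
  obtain ⟨hns, hmin⟩ := descend_path hXpre hWL hneL
  have h2 : W' ++ [pick (bs T W')] = W' ++ [cW T W'] := by
    refine List.IsPrefix.eq_of_length ?_ (by simp)
    refine List.prefix_of_prefix_length_le hmin ?_ (by simp)
    show W' ++ [cW T W'] <+: fmap T W
    rw [heq]; exact hL
  have h3 : pick (bs T W') = cW T W' := by
    have := List.append_cancel_left h2
    simpa using this
  exact cW_ne hW' hns h3.symm

lemma fmap_injOn (T : List α) : Set.InjOn (fmap T) (RM2set T) := by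
  intro W hW W' hW' heq
  by_contra hne
  rcases le_total W.length W'.length with hle | hle
  · have hp1 : W <+: fmap T W := (List.prefix_append _ _).trans (descend_prefix _ _)
    have hp2 : W' <+: fmap T W := by
      rw [heq]; exact (List.prefix_append _ _).trans (descend_prefix _ _)
    exact fmap_key hW' (List.prefix_of_prefix_length_le hp1 hp2 hle) hne heq
  · have hp1 : W' <+: fmap T W' := (List.prefix_append _ _).trans (descend_prefix _ _)
    have hp2 : W <+: fmap T W' := by
      rw [← heq]; exact (List.prefix_append _ _).trans (descend_prefix _ _)
    exact fmap_key hW (List.prefix_of_prefix_length_le hp1 hp2 hle) (Ne.symm hne) heq.symm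

lemma card_RM2_le (T : List α) : (RM2set T).card ≤ T.length :=
  le_trans (Finset.card_le_card_of_injOn (fmap T) (fun _ h => fmap_mem_sfx h) (fmap_injOn T))
    (card_sfx_le T)

end Aux4
section Aux5
variable [DecidableEq α] [Fintype α]

def Eset (T : List α) : Finset (List α) :=
  (MRset T).biUnion fun S =>
    (Finset.univ.filter fun a : α => (S ++ [a]) <:+: T).image fun a => S ++ [a]

lemma er_eq_card (T : List α) : er T = (Eset T).card := by
  rw [er, Eset, Finset.card_biUnion]
  · exact Finset.sum_congr rfl fun S _ =>
      (Finset.card_image_of_injective _ fun a b h => by simpa using h).symm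
  · intro S hS S' hS' hne
    rw [Function.onFun, Finset.disjoint_left]
    intro X hX hX'
    simp only [Finset.mem_image, Finset.mem_filter] at hX hX'
    obtain ⟨a, _, ha⟩ := hX
    obtain ⟨b, _, hb⟩ := hX'
    apply hne
    rw [← ha] at hb
    have := congrArg List.dropLast hb
    simpa [List.dropLast_concat] using this.symm

lemma mem_Eset {T X : List α} :
    X ∈ Eset T ↔ ∃ S ∈ MRset T, ∃ a, X = S ++ [a] ∧ (S ++ [a]) <:+: T := by
  simp only [Eset, Finset.mem_biUnion, Finset.mem_image, Finset.mem_filter, Finset.mem_univ,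
    true_and]
  constructor
  · rintro ⟨S, hS, a, ha, rfl⟩; exact ⟨S, hS, a, rfl, ha⟩
  · rintro ⟨S, hS, a, rfl, ha⟩; exact ⟨S, hS, a, ha, rfl⟩

lemma Eset_infix {T X : List α} (h : X ∈ Eset T) : X <:+: T := by
  obtain ⟨S, _, a, rfl, ha⟩ := mem_Eset.mp h
  exact ha

lemma Eset_ne_nil {T X : List α} (h : X ∈ Eset T) : X ≠ [] := by
  obtain ⟨S, _, a, rfl, _⟩ := mem_Eset.mp h
  simp

lemma occ_lt_of_nest {T X X' : List α} (hX' : X' ∈ Eset T) (hpre : X <+: X')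
    (hne : X ≠ X') : occ T X' < occ T X := by
  obtain ⟨S', hS', a', rfl, _⟩ := mem_Eset.mp hX'
  rw [MRset_eq_filter, Finset.mem_filter] at hS'
  have hmax := hS'.2.2 a'
  have hlen : X.length < S'.length + 1 := by
    rcases lt_or_eq_of_le hpre.length_le with h' | h'
    · simpa using h'
    · exact absurd (hpre.eq_of_length h') hne
  have hXS : X <+: S' := by
    refine List.prefix_of_prefix_length_le hpre (List.prefix_append _ _) ?_
    omega
  exact lt_of_lt_of_le hmax.2 (occ_anti hXS)

noncomputable def gpos (T X : List α) : ℕ :=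
  if h : (occSet T X).Nonempty then h.choose else 0

lemma gpos_mem {T X : List α} (h : (occSet T X).Nonempty) : gpos T X ∈ occSet T X := by
  rw [gpos, dif_pos h]; exact h.choose_spec

lemma comparable_of_occSet {T X X' : List α} {i : ℕ} (h : i ∈ occSet T X)
    (h' : i ∈ occSet T X') (hlen : X.length ≤ X'.length) : X <+: X' := by
  rw [mem_occSet] at h h'
  have h1 : X <+: T.drop i := h.2 ▸ List.take_prefix _ _
  have h2 : X' <+: T.drop i := h'.2 ▸ List.take_prefix _ _
  exact List.prefix_of_prefix_length_le h1 h2 hlen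

lemma card_E1_le (T : List α) :
    ((Eset T).filter fun X => occ T X = 1).card ≤ T.length := by
  refine le_trans (Finset.card_le_card_of_injOn (t := Finset.range T.length) (gpos T) ?_ ?_)
    (le_of_eq (Finset.card_range _))
  · intro X hX
    rw [Finset.mem_coe, Finset.mem_filter] at hX
    have hne : (occSet T X).Nonempty := by
      rw [← Finset.card_pos, ← occ_eq_card, hX.2]; omega
    have hm := gpos_mem hne
    have hb := occSet_bound hm
    have hX0 : X ≠ [] := Eset_ne_nil hX.1
    have : 0 < X.length := List.length_pos_iff.mpr hX0
    rw [Finset.mem_coe, Finset.mem_range]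
    omega
  · intro X hX X' hX' heq
    rw [Finset.coe_filter, Set.mem_setOf_eq] at hX hX'
    by_contra hne
    have hne1 : (occSet T X).Nonempty := by
      rw [← Finset.card_pos, ← occ_eq_card, hX.2]; omega
    have hne2 : (occSet T X').Nonempty := by
      rw [← Finset.card_pos, ← occ_eq_card, hX'.2]; omega
    have hm1 := gpos_mem hne1
    have hm2 := gpos_mem hne2
    rw [heq] at hm1
    rcases le_total X.length X'.length with hle | hle
    · have hp := comparable_of_occSet hm1 hm2 hle
      have := occ_lt_of_nest hX'.1 hp hne
      omega
    · have hp := comparable_of_occSet hm2 hm1 hle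
      have := occ_lt_of_nest hX.1 hp (Ne.symm hne)
      omega

variable [Nonempty α]

lemma card_E2_le (T : List α) :
    ((Eset T).filter fun X => 2 ≤ occ T X).card ≤ T.length := by
  refine le_trans (Finset.card_le_card_of_injOn (sat T) ?_ ?_) (card_RM2_le T)
  · intro X hX
    rw [Finset.mem_coe, Finset.mem_filter] at hX
    exact sat_mem_RM2 hX.2
  · intro X hX X' hX' heq
    rw [Finset.coe_filter, Set.mem_setOf_eq] at hX hX'
    by_contra hne
    have hp1 : X <+: sat T X := sat_prefix T X
    have hp2 : X' <+: sat T X := heq ▸ sat_prefix T X'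
    have hocc : occ T X = occ T X' := by
      rw [← sat_occ T X, ← sat_occ T X', heq]
    rcases le_total X.length X'.length with hle | hle
    · have hp := List.prefix_of_prefix_length_le hp1 hp2 hle
      have := occ_lt_of_nest hX'.1 hp hne
      omega
    · have hp := List.prefix_of_prefix_length_le hp2 hp1 hle
      have := occ_lt_of_nest hX.1 hp (Ne.symm hne)
      omega

lemma er_le_two_mul (T : List α) : er T ≤ 2 * T.length := by
  rw [er_eq_card]
  have hsplit := Finset.card_filter_add_card_filter_not
    (s := Eset T) (p := fun X => occ T X = 1)
  have hsub : (Eset T).filter (fun X => ¬ occ T X = 1) ⊆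
      (Eset T).filter fun X => 2 ≤ occ T X := by
    intro X hX
    rw [Finset.mem_filter] at hX ⊢
    have : 0 < occ T X := occ_pos_iff.mpr (Eset_infix hX.1)
    exact ⟨hX.1, by omega⟩
  have h2 := Finset.card_le_card hsub
  have := card_E1_le T
  have := card_E2_le T
  omega

end Aux5
section Aux6
variable [DecidableEq α]

lemma occSet_reverse_mem {T S : List α} {i : ℕ} (h : i ∈ occSet T S) :
    T.length - S.length - i ∈ occSet T.reverse S.reverse := by
  have hd := occSet_take_drop h
  have hb := occSet_bound h
  have hi : i ≤ T.length := (mem_occSet.mp h).1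
  have h1 : T.reverse = (T.drop (i + S.length)).reverse ++ S.reverse ++ (T.take i).reverse := by
    conv_lhs => rw [hd]
    simp [List.reverse_append, List.append_assoc]
  have hm := mem_occSet_of_decomp h1
  have hlen : (T.drop (i + S.length)).reverse.length = T.length - S.length - i := by
    simp; omega
  rwa [hlen] at hm

lemma occ_reverse (T S : List α) : occ T S = occ T.reverse S.reverse := by
  rw [occ_eq_card, occ_eq_card]
  refine Finset.card_nbij' (fun i => T.length - S.length - i)
    (fun j => T.length - S.length - j) ?_ ?_ ?_ ?_
  · intro i hi
    exact occSet_reverse_mem hi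
  · intro j hj
    have := occSet_reverse_mem hj
    simpa using this
  · intro i hi
    have := occSet_bound hi
    simp; omega
  · intro j hj
    have := occSet_bound hj
    simp at this ⊢; omega

lemma maxRepeat_reverse {T S : List α} (h : MaxRepeat T S) :
    MaxRepeat T.reverse S.reverse := by
  obtain ⟨h2, hmax⟩ := h
  refine ⟨by rw [← occ_reverse]; exact h2, fun a => ?_⟩
  constructor
  · rw [show a :: S.reverse = (S ++ [a]).reverse by simp, ← occ_reverse, ← occ_reverse]
    exact (hmax a).2
  · rw [show S.reverse ++ [a] = (a :: S).reverse by simp, ← occ_reverse, ← occ_reverse]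
    exact (hmax a).1

variable [Fintype α]

lemma MRset_reverse (T : List α) : MRset T.reverse = (MRset T).image List.reverse := by
  ext W
  rw [Finset.mem_image]
  simp only [MRset_eq_filter, Finset.mem_filter, mem_infixes]
  constructor
  · rintro ⟨hinf, hmax⟩
    refine ⟨W.reverse, ⟨?_, ?_⟩, List.reverse_reverse W⟩
    · rw [← List.reverse_infix]; simpa using hinf
    · have := maxRepeat_reverse hmax
      simpa using this
  · rintro ⟨S, ⟨hinf, hmax⟩, rfl⟩
    exact ⟨by rw [List.reverse_infix]; exact hinf, maxRepeat_reverse hmax⟩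

lemma lext_eq_rext_reverse (T S : List α) : lext T S = rext T.reverse S.reverse := by
  rw [lext, rext]
  congr 1
  refine Finset.filter_congr fun a _ => ?_
  rw [← List.reverse_cons, List.reverse_infix]

lemma el_eq_er_reverse (T : List α) : el T = er T.reverse := by
  rw [el, er, MRset_reverse,
    Finset.sum_image (fun x _ y _ h => List.reverse_injective h)]
  exact Finset.sum_congr rfl fun S _ => lext_eq_rext_reverse T S

end Aux6
section Final
variable [DecidableEq α] [Fintype α]

lemma occ_nil (T : List α) : occ T [] = T.length + 1 := by
  rw [occ]
  have : ∀ i, (T.drop i).take ([] : List α).length = ([] : List α) := by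
    intro i; simp
  rw [Finset.filter_true_of_mem fun i _ => this i, Finset.card_range]

lemma occ_single_le (T : List α) (a : α) : occ T [a] ≤ T.length := by
  rw [occ_eq_card]
  refine le_trans (Finset.card_le_card (t := Finset.range T.length) ?_)
    (le_of_eq (Finset.card_range _))
  intro i hi
  have := occSet_bound hi
  simp at this
  simp
  omega

lemma nil_mem_MRset {T : List α} (h : 2 ≤ T.length) : ([] : List α) ∈ MRset T := by
  rw [MRset_eq_filter, Finset.mem_filter, mem_infixes]
  refine ⟨List.nil_infix, ?_, fun a => ?_⟩
  · rw [occ_nil]; omega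
  · constructor
    · rw [occ_nil]
      exact lt_of_le_of_lt (occ_single_le T a) (by omega)
    · rw [occ_nil]
      have := occ_single_le T a
      calc occ T ([] ++ [a]) = occ T [a] := by rw [List.nil_append]
        _ < T.length + 1 := by omega

lemma toFinset_eq_filter (T : List α) :
    T.toFinset = Finset.univ.filter fun a : α => [a] <:+: T := by
  ext a
  simp only [List.mem_toFinset, Finset.mem_filter, Finset.mem_univ, true_and]
  constructor
  · intro ha
    obtain ⟨s, t, hst⟩ := List.append_of_mem ha
    exact ⟨s, t, by rw [hst]; simp⟩
  · intro hinf
    exact hinf.sublist.subset (by simp)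

lemma rext_nil (T : List α) : rext T [] = T.toFinset.card := by
  rw [rext, toFinset_eq_filter]
  congr 1

lemma rext_pos {T S : List α} (hS : S ∈ MRset T) : 1 ≤ rext T S := by
  rw [MRset_eq_filter, Finset.mem_filter] at hS
  obtain ⟨a, ha⟩ := exists_branch_of_occ_two hS.2.1
  rw [rext]
  exact Finset.card_pos.mpr ⟨a, Finset.mem_filter.mpr ⟨Finset.mem_univ a, ha⟩⟩

lemma lext_le (T S : List α) : lext T S ≤ T.toFinset.card := by
  rw [lext]
  refine Finset.card_le_card ?_
  intro a ha
  rw [Finset.mem_filter] at ha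
  rw [List.mem_toFinset]
  exact ha.2.sublist.subset (by simp)

end Final

/-- `el(T)/er(T) ≤ √(2n)`, i.e. `el(T)² ≤ 2n · er(T)²`. -/
theorem el_sq_le_two_n_er_sq [DecidableEq α] [Fintype α] (T : List α) (h : 2 ≤ T.length) :
    (el T) ^ 2 ≤ 2 * T.length * (er T) ^ 2 := by
  have hNe : Nonempty α := by
    cases T with
    | nil => simp at h
    | cons a _ => exact ⟨a⟩
  have hel2n : el T ≤ 2 * T.length := by
    rw [el_eq_er_reverse]
    have := er_le_two_mul T.reverse
    simpa using this
  have hsig_le : T.toFinset.card ≤ er T := by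
    rw [← rext_nil]
    exact Finset.single_le_sum (f := fun S => rext T S) (fun _ _ => Nat.zero_le _)
      (nil_mem_MRset h)
  have hel_sig : el T ≤ T.toFinset.card * er T := by
    rw [el, er, Finset.mul_sum]
    refine Finset.sum_le_sum fun S hS => ?_
    calc lext T S ≤ T.toFinset.card := lext_le T S
      _ = T.toFinset.card * 1 := (Nat.mul_one _).symm
      _ ≤ T.toFinset.card * rext T S := Nat.mul_le_mul_left _ (rext_pos hS)
  calc (el T) ^ 2 = el T * el T := sq (el T)
    _ ≤ (T.toFinset.card * er T) * (2 * T.length) := Nat.mul_le_mul hel_sig hel2n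
    _ ≤ (er T * er T) * (2 * T.length) :=
        Nat.mul_le_mul_right _ (Nat.mul_le_mul_right _ hsig_le)
    _ = 2 * T.length * (er T) ^ 2 := by ring
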